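/- arXiv:0911.1984 — 4 statements merged into one kernel-verified Lean document; each statement's English description precedes it below -/
import Mathlib

section
/- Let T be an ergodic measure-preserving transformation of a probability space (X, μ), and let f ∈ L¹(X, μ) with ∫ f dμ = 0. Define the Birkhoff sums Sₙ(f,x) = f(x) + f(Tx) + ... + f(Tⁿ⁻¹x). Then either Sₙ(f,x) is unbounded from below for μ-almost every x ∈ X, or f is a measurable coboundary, i.e. there exists a measurable function g with f(x) = g(x) − g(Tx) for μ-almost every x. -/
open MeasureTheory Filter Topology

section aux
variable {X : Type*} [MeasurableSpace X] {μ : Measure X}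

lemma birkhoffSum_coboundary_ae {T : X → X} (hT : MeasurePreserving T μ μ)
    {v u : X → ℝ} (hv : v =ᵐ[μ] fun x => u x - u (T x)) (n : ℕ) :
    (birkhoffSum T v n : X → ℝ) =ᵐ[μ] fun x => u x - u (T^[n] x) := by
  induction n with
  | zero => refine ae_of_all μ fun x => ?_; simp [birkhoffSum]
  | succ n ih =>
    have h1 : (fun x => v (T^[n] x)) =ᵐ[μ] fun x => u (T^[n] x) - u (T^[n+1] x) := by
      filter_upwards [(hT.iterate n).quasiMeasurePreserving.ae_eq hv] with x hx
      simpa [Function.comp, Function.iterate_succ_apply'] using hx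
    filter_upwards [ih, h1] with x hx1 hx2
    have : birkhoffSum T v (n+1) x = birkhoffSum T v n x + v (T^[n] x) :=
      birkhoffSum_succ T v n x
    rw [this, hx1, hx2]; ring

lemma tendsto_meas_tail [IsFiniteMeasure μ] {u : X → ℝ} (hu : Measurable u)
    {c : ℝ} (hc : 0 < c) :
    Tendsto (fun n : ℕ => μ {x | (n : ℝ) * c ≤ |u x|}) atTop (𝓝 0) := by
  have h0 : (⋂ n : ℕ, {x | (n:ℝ) * c ≤ |u x|}) = ∅ := by
    ext x
    simp only [Set.mem_iInter, Set.mem_setOf_eq, Set.mem_empty_iff_false, iff_false, not_forall,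
      not_le]
    obtain ⟨n, hn⟩ := exists_nat_gt (|u x| / c)
    exact ⟨n, by rwa [div_lt_iff₀ hc] at hn⟩
  have hmeas : ∀ n : ℕ, NullMeasurableSet {x | (n:ℝ) * c ≤ |u x|} μ :=
    fun n => (measurableSet_le measurable_const hu.abs).nullMeasurableSet
  have hanti : Antitone fun n : ℕ => {x | (n:ℝ) * c ≤ |u x|} := by
    intro n m hnm x hx
    have : (n:ℝ) * c ≤ (m:ℝ) * c := mul_le_mul_of_nonneg_right (Nat.cast_le.2 hnm) hc.le
    exact le_trans this hx
  have := tendsto_measure_iInter_atTop hmeas hanti ⟨0, measure_ne_top μ _⟩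
  rwa [h0, measure_empty] at this


lemma measurable_birkhoffAverage {T : X → X} (hTm : Measurable T) {w : X → ℝ}
    (hwm : Measurable w) (n : ℕ) : Measurable (birkhoffAverage ℝ T w n) := by
  have hsum : Measurable (birkhoffSum T w n) :=
    Finset.measurable_sum _ fun i _ => hwm.comp (hTm.iterate i)
  exact hsum.const_smul ((n:ℝ)⁻¹)

lemma integrable_comp_iterate {T : X → X} (hmp : MeasurePreserving T μ μ) {w : X → ℝ}
    (hwi : Integrable w μ) (k : ℕ) : Integrable (fun x => w (T^[k] x)) μ := by
  have := memLp_one_iff_integrable.1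
    ((memLp_one_iff_integrable.2 hwi).comp_measurePreserving (hmp.iterate k))
  exact this

lemma integrable_birkhoffSum {T : X → X} (hmp : MeasurePreserving T μ μ) {w : X → ℝ}
    (hwi : Integrable w μ) (n : ℕ) : Integrable (birkhoffSum T w n) μ := by
  have : Integrable (fun x => ∑ k ∈ Finset.range n, w (T^[k] x)) μ :=
    integrable_finset_sum _ fun k _ => integrable_comp_iterate hmp hwi k
  exact this

lemma integrable_birkhoffAverage {T : X → X} (hmp : MeasurePreserving T μ μ) {w : X → ℝ}
    (hwi : Integrable w μ) (n : ℕ) : Integrable (birkhoffAverage ℝ T w n) μ := by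
  have := (integrable_birkhoffSum hmp hwi n).smul ((n:ℝ)⁻¹)
  exact this

lemma integral_comp_iterate {T : X → X} (hmp : MeasurePreserving T μ μ) {w : X → ℝ}
    (hwm : Measurable w) (k : ℕ) : ∫ x, w (T^[k] x) ∂μ = ∫ x, w x ∂μ := by
  have hmap := (hmp.iterate k).map_eq
  have h := integral_map (f := w) ((hmp.measurable.iterate k)).aemeasurable
    (by rw [hmap]; exact hwm.aestronglyMeasurable)
  rw [hmap] at h; exact h.symm

lemma integral_birkhoffAverage_eq [IsProbabilityMeasure μ] {T : X → X}
    (hmp : MeasurePreserving T μ μ) {w : X → ℝ} (hwm : Measurable w) (hwi : Integrable w μ)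
    {n : ℕ} (hn : 1 ≤ n) :
    ∫ x, birkhoffAverage ℝ T w n x ∂μ = ∫ x, w x ∂μ := by
  have heq : ∫ x, birkhoffAverage ℝ T w n x ∂μ
      = (n:ℝ)⁻¹ • ∑ k ∈ Finset.range n, ∫ x, w (T^[k] x) ∂μ := by
    simp only [birkhoffAverage, birkhoffSum]
    rw [integral_smul, integral_finset_sum _ fun k _ => integrable_comp_iterate hmp hwi k]
  rw [heq]
  simp only [integral_comp_iterate hmp hwm, Finset.sum_const, Finset.card_range, nsmul_eq_mul,
    smul_eq_mul]
  have hn0 : (n:ℝ) ≠ 0 := Nat.cast_ne_zero.2 (by omega)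
  field_simp



set_option maxHeartbeats 1000000 in
set_option synthInstance.maxHeartbeats 400000 in
lemma tendstoInMeasure_birkhoffAverage [IsProbabilityMeasure μ] {T : X → X} (hT : Ergodic T μ)
    {w : X → ℝ} (hwm : Measurable w) (hw2 : MemLp w 2 μ) :
    TendstoInMeasure μ (fun n => birkhoffAverage ℝ T w n) atTop
      (fun _ => ∫ x, w x ∂μ) := by
  have hmp := hT.toMeasurePreserving
  have hTm : Measurable T := hmp.measurable
  set K : Lp ℝ 2 μ →L[ℝ] Lp ℝ 2 μ :=
    (Lp.compMeasurePreservingₗᵢ ℝ T hmp).toContinuousLinearMap with hKdef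
  have hKnorm : ‖K‖ ≤ 1 := LinearIsometry.norm_toContinuousLinearMap_le _
  set W : Lp ℝ 2 μ := hw2.toLp w with hWdef
  have hKapp : ∀ g : Lp ℝ 2 μ, (⇑(K g) : X → ℝ) =ᵐ[μ] (⇑g : X → ℝ) ∘ T := by
    intro g
    exact Lp.coeFn_compMeasurePreserving g hmp
  have hiter : ∀ n : ℕ, (⇑((⇑K)^[n] W) : X → ℝ) =ᵐ[μ] fun x => w (T^[n] x) := by
    intro n; induction n with
    | zero => simpa using hw2.coeFn_toLp
    | succ n ih =>
      rw [Function.iterate_succ_apply']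
      have h2 : ((⇑((⇑K)^[n] W) : X → ℝ) ∘ T) =ᵐ[μ] (fun x => w (T^[n] x)) ∘ T :=
        hmp.quasiMeasurePreserving.ae_eq ih
      filter_upwards [hKapp ((⇑K)^[n] W), h2] with x hx1 hx2
      rw [hx1]
      simpa [Function.comp, Function.iterate_succ_apply] using hx2
  have hBn : ∀ n : ℕ, (⇑(birkhoffAverage ℝ (⇑K) id n W) : X → ℝ) =ᵐ[μ]
      birkhoffAverage ℝ T w n := by
    intro n
    have hsum : (⇑(birkhoffSum (⇑K) id n W) : X → ℝ) =ᵐ[μ] birkhoffSum T w n := by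
      induction n with
      | zero =>
        simp only [birkhoffSum_zero]
        filter_upwards [Lp.coeFn_zero ℝ 2 μ] with x hx
        simp [birkhoffSum, hx]
      | succ n ih =>
        have he : birkhoffSum (⇑K) id (n+1) W
            = birkhoffSum (⇑K) id n W + (⇑K)^[n] W := birkhoffSum_succ _ _ _ _
        rw [he]
        filter_upwards [Lp.coeFn_add (birkhoffSum (⇑K) id n W) ((⇑K)^[n] W), ih,
          hiter n] with x hx1 hx2 hx3
        rw [hx1]
        simp only [Pi.add_apply, hx2, hx3, birkhoffSum_succ]
    have hs := Lp.coeFn_smul ((n:ℝ)⁻¹) (birkhoffSum (⇑K) id n W)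
    simp only [birkhoffAverage]
    filter_upwards [hs, hsum] with x hx1 hx2
    rw [hx1]
    simp [birkhoffAverage, smul_eq_mul, hx2]
  have hconv := K.tendsto_birkhoffAverage_orthogonalProjection hKnorm W
  obtain ⟨P, hfix, hconv⟩ : ∃ P : Lp ℝ 2 μ, K P = P ∧
      Tendsto (birkhoffAverage ℝ (⇑K) _root_.id · W) atTop (𝓝 P) := by
    refine ⟨_, ?_, hconv⟩
    have hmem := (Submodule.orthogonalProjectionOnto (K.eqLocus (1 : Lp ℝ 2 μ →L[ℝ] Lp ℝ 2 μ)) W).2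
    rw [LinearMap.mem_eqLocus] at hmem
    simpa using hmem
  have hPinv : ((⇑P : X → ℝ) ∘ T) =ᵐ[μ] (⇑P : X → ℝ) := by
    have h1 := hKapp P
    rw [hfix] at h1
    exact h1.symm
  obtain ⟨cP, hcP⟩ : ∃ c : ℝ, (⇑P : X → ℝ) =ᵐ[μ] fun _ => c := by
    obtain ⟨c, hc⟩ := hT.quasiErgodic.ae_eq_const_of_ae_eq_comp₀
      ((Lp.aestronglyMeasurable P).aemeasurable.nullMeasurable) hPinv
    exact ⟨c, hc⟩
  set one : Lp ℝ 2 μ := (memLp_const (1:ℝ)).toLp (fun _ => (1:ℝ)) with honedef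
  have hinner : ∀ g : Lp ℝ 2 μ, (inner ℝ g one : ℝ) = ∫ x, (⇑g : X → ℝ) x ∂μ := by
    intro g
    rw [L2.inner_def]
    refine integral_congr_ae ?_
    filter_upwards [MemLp.coeFn_toLp (memLp_const (1:ℝ))] with x hx
    rw [show one x = (fun _ : X => (1:ℝ)) x from hx]
    simp [RCLike.inner_apply]
  have hIntegrableIter : ∀ k : ℕ, Integrable (fun x => w (T^[k] x)) μ := by
    intro k
    have := (hw2.comp_measurePreserving (hmp.iterate k)).integrable one_le_two
    exact this
  have hIntIter : ∀ k : ℕ, ∫ x, w (T^[k] x) ∂μ = ∫ x, w x ∂μ := by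
    intro k
    have hmap := (hmp.iterate k).map_eq
    have h := integral_map (f := w) ((hTm.iterate k)).aemeasurable
      (by rw [hmap]; exact hwm.aestronglyMeasurable)
    rw [hmap] at h; exact h.symm
  have hIntAvg : ∀ n : ℕ, 1 ≤ n → ∫ x, birkhoffAverage ℝ T w n x ∂μ = ∫ x, w x ∂μ := by
    intro n hn
    have heq : ∫ x, birkhoffAverage ℝ T w n x ∂μ
        = (n:ℝ)⁻¹ • ∑ k ∈ Finset.range n, ∫ x, w (T^[k] x) ∂μ := by
      simp only [birkhoffAverage, birkhoffSum]
      rw [integral_smul, integral_finset_sum _ fun k _ => hIntegrableIter k]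
    rw [heq]
    simp only [hIntIter, Finset.sum_const, Finset.card_range, nsmul_eq_mul, smul_eq_mul]
    have hn0 : (n:ℝ) ≠ 0 := Nat.cast_ne_zero.2 (by omega)
    field_simp
  have hTendInner : Tendsto (fun n => (inner ℝ (birkhoffAverage ℝ (⇑K) _root_.id n W) one : ℝ))
      atTop (𝓝 (inner ℝ P one : ℝ)) := hconv.inner tendsto_const_nhds
  have h1 : (fun n => (inner ℝ (birkhoffAverage ℝ (⇑K) _root_.id n W) one : ℝ))
      =ᶠ[atTop] fun _ => ∫ x, w x ∂μ := by
    filter_upwards [eventually_ge_atTop 1] with n hn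
    rw [hinner, integral_congr_ae (hBn n), hIntAvg n hn]
  have hlim : (inner ℝ P one : ℝ) = ∫ x, w x ∂μ :=
    tendsto_nhds_unique (hTendInner.congr' h1) tendsto_const_nhds
  have hcw : cP = ∫ x, w x ∂μ := by
    rw [← hlim, hinner P, integral_congr_ae hcP]
    simp
  have hLp := (Lp.tendsto_Lp_iff_tendsto_eLpNorm'
      (fun n => birkhoffAverage ℝ (⇑K) _root_.id n W) P).mp hconv
  have help : Tendsto (fun n => eLpNorm (birkhoffAverage ℝ T w n - fun _ => ∫ x, w x ∂μ) 2 μ)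
      atTop (𝓝 0) := by
    refine hLp.congr fun n => ?_
    refine eLpNorm_congr_ae ?_
    filter_upwards [hBn n, hcP] with x hx1 hx2
    simp only [Pi.sub_apply, hx1, hx2, hcw]
  have hAvgMeas : ∀ n : ℕ, Measurable (birkhoffAverage ℝ T w n) := by
    intro n
    have hsum : Measurable (birkhoffSum T w n) :=
      Finset.measurable_sum _ fun i _ => hwm.comp (hTm.iterate i)
    exact hsum.const_smul ((n:ℝ)⁻¹)
  refine tendstoInMeasure_of_tendsto_eLpNorm (by norm_num : (2:ENNReal) ≠ 0)
    (fun n => (hAvgMeas n).aestronglyMeasurable) aestronglyMeasurable_const help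


set_option maxHeartbeats 1000000 in
lemma coboundary_integral_nonpos [IsProbabilityMeasure μ] {T : X → X} (hT : Ergodic T μ)
    {u v : X → ℝ} (hu : Measurable u) (hvm : Measurable v) (hvi : Integrable v μ)
    (hv : v =ᵐ[μ] fun x => u x - u (T x)) : ∫ x, v x ∂μ ≤ 0 := by
  by_contra hpos
  push_neg at hpos
  have hmp := hT.toMeasurePreserving
  have hTm : Measurable T := hmp.measurable
  set c : ℝ := ∫ x, v x ∂μ with hcdef
  -- truncations
  set vM : ℕ → X → ℝ := fun M x => max (min (v x) (M:ℝ)) (-(M:ℝ)) with hvMdef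
  have hvMmeas : ∀ M : ℕ, Measurable (vM M) := fun M =>
    (hvm.min measurable_const).max measurable_const
  have hvMabs : ∀ (M : ℕ) (x : X), |vM M x| ≤ |v x| := by
    intro M x
    rw [abs_le]
    constructor
    · refine le_max_of_le_left (le_min (neg_abs_le _) ?_)
      exact le_trans (neg_nonpos.2 (abs_nonneg _)) (Nat.cast_nonneg M)
    · refine max_le (le_trans (min_le_left _ _) (le_abs_self _)) ?_
      exact le_trans (neg_nonpos.2 (Nat.cast_nonneg M)) (abs_nonneg _)
  have hvMint : ∀ M : ℕ, Integrable (vM M) μ := fun M =>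
    hvi.abs.mono' (hvMmeas M).aestronglyMeasurable
      (ae_of_all _ fun x => by simpa [Real.norm_eq_abs] using hvMabs M x)
  -- L¹ convergence of truncations
  have hdom : Tendsto (fun M : ℕ => ∫ x, |v x - vM M x| ∂μ) atTop (𝓝 0) := by
    have h := tendsto_integral_of_dominated_convergence (μ := μ)
      (F := fun M x => |v x - vM M x|) (f := fun _ => (0:ℝ)) (bound := fun x => 2 * |v x|)
      (fun M => ((hvm.sub (hvMmeas M)).abs).aestronglyMeasurable)
      (hvi.abs.const_mul 2)
      (fun M => ae_of_all _ fun x => by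
        have h1 : |v x - vM M x| ≤ |v x| + |vM M x| := by
          simpa [Real.norm_eq_abs] using norm_sub_le (v x) (vM M x)
        have h2 := hvMabs M x
        simp only [Real.norm_eq_abs, abs_abs]
        linarith)
      (ae_of_all _ fun x => ?_)
    · simpa using h
    · have hev : ∀ᶠ M : ℕ in atTop, |v x - vM M x| = 0 := by
        filter_upwards [eventually_ge_atTop ⌈|v x|⌉₊] with M hM
        have hle : |v x| ≤ (M:ℝ) := le_trans (Nat.le_ceil _) (Nat.cast_le.2 hM)
        have h1 : min (v x) (M:ℝ) = v x := min_eq_left (le_trans (le_abs_self _) hle)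
        have h2 : max (v x) (-(M:ℝ)) = v x := max_eq_left
          (le_trans (neg_le_neg hle) (neg_abs_le _))
        simp [hvMdef, h1, h2]
      exact Tendsto.congr' (hev.mono fun M hM => hM.symm) tendsto_const_nhds
  obtain ⟨M₀, hM₀⟩ : ∃ M : ℕ, ∫ x, |v x - vM M x| ∂μ < c / 16 :=
    (hdom.eventually_lt_const (by positivity)).exists
  set w : X → ℝ := vM M₀ with hwdef
  have hwm : Measurable w := hvMmeas M₀
  have hw2 : MemLp w 2 μ := by
    refine MemLp.of_bound hwm.aestronglyMeasurable (M₀ : ℝ) (ae_of_all _ fun x => ?_)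
    rw [Real.norm_eq_abs, abs_le]
    constructor
    · exact le_max_right _ _
    · exact max_le (min_le_right _ _) (le_trans (neg_nonpos.2 (Nat.cast_nonneg M₀))
        (Nat.cast_nonneg M₀))
  have hwint : Integrable w μ := hw2.integrable one_le_two
  have hdint : Integrable (fun x => v x - w x) μ := hvi.sub hwint
  have hdsmall : ∫ x, |v x - w x| ∂μ < c / 16 := hM₀
  have hwc : c - c/16 ≤ ∫ x, w x ∂μ := by
    have h1 : c - ∫ x, w x ∂μ = ∫ x, (v x - w x) ∂μ := by
      rw [integral_sub hvi hwint]
    have h2 : |∫ x, (v x - w x) ∂μ| ≤ ∫ x, |v x - w x| ∂μ := by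
      simpa [Real.norm_eq_abs] using norm_integral_le_integral_norm (μ := μ)
        (f := fun x => v x - w x)
    rw [← h1] at h2
    have := (abs_le.1 h2).2
    linarith [hdsmall]
  -- convergence in measure for w
  have hwTend := tendstoInMeasure_birkhoffAverage hT hwm hw2
  have hbad1 : Tendsto
      (fun n => μ {x | c/8 ≤ dist (birkhoffAverage ℝ T w n x) (∫ x, w x ∂μ)})
      atTop (𝓝 0) := tendstoInMeasure_iff_dist.mp hwTend (c/8) (by positivity)
  -- bad0 : the averages of v are small in measure (coboundary!)
  have hbad0 : Tendsto (fun n => μ {x | c/4 ≤ |birkhoffAverage ℝ T v n x|}) atTop (𝓝 0) := by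
    have htail := tendsto_meas_tail (μ := μ) hu (show (0:ℝ) < c/8 by positivity)
    have hbound : ∀ᶠ n in atTop, μ {x | c/4 ≤ |birkhoffAverage ℝ T v n x|}
        ≤ 2 * μ {x | (n:ℝ) * (c/8) ≤ |u x|} := by
      filter_upwards [eventually_ge_atTop 1] with n hn
      set A : Set X := {x | (n:ℝ) * (c/8) ≤ |u x|} with hAdef
      have hAmeas : MeasurableSet A := measurableSet_le measurable_const hu.abs
      have hsub : {x | c/4 ≤ |birkhoffAverage ℝ T v n x|} ≤ᵐ[μ] ((A ∪ T^[n] ⁻¹' A : Set X) : Set X) := by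
        filter_upwards [birkhoffSum_coboundary_ae hmp hv n] with x hx
        intro hmem
        have hn0 : (0:ℝ) < (n:ℝ) := by exact_mod_cast Nat.pos_of_ne_zero (by omega)
        have h1 : (n:ℝ) * (c/4) ≤ |birkhoffSum T v n x| := by
          have habs : |birkhoffAverage ℝ T v n x| = (n:ℝ)⁻¹ * |birkhoffSum T v n x| := by
            rw [birkhoffAverage, smul_eq_mul, abs_mul, abs_of_nonneg (by positivity)]
          have hc4 : c/4 ≤ (n:ℝ)⁻¹ * |birkhoffSum T v n x| := by
            rw [← habs]; exact hmem
          calc (n:ℝ) * (c/4) ≤ (n:ℝ) * ((n:ℝ)⁻¹ * |birkhoffSum T v n x|) := by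
                exact mul_le_mul_of_nonneg_left hc4 hn0.le
            _ = |birkhoffSum T v n x| := by field_simp
        rw [hx] at h1
        have htri : |u x - u (T^[n] x)| ≤ |u x| + |u (T^[n] x)| := by
          simpa [Real.norm_eq_abs] using norm_sub_le (u x) (u (T^[n] x))
        rcases le_or_gt ((n:ℝ) * (c/8)) |u x| with hcase | hcase
        · exact Or.inl hcase
        · refine Or.inr ?_
          show (n:ℝ) * (c/8) ≤ |u (T^[n] x)|
          nlinarith
      calc μ {x | c/4 ≤ |birkhoffAverage ℝ T v n x|} ≤ μ (A ∪ T^[n] ⁻¹' A) :=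
            measure_mono_ae hsub
        _ ≤ μ A + μ (T^[n] ⁻¹' A) := measure_union_le _ _
        _ = 2 * μ A := by
            rw [(hmp.iterate n).measure_preimage hAmeas.nullMeasurableSet, two_mul]
    have h2tail : Tendsto (fun n : ℕ => 2 * μ {x | (n:ℝ) * (c/8) ≤ |u x|}) atTop (𝓝 0) := by
      have := ENNReal.Tendsto.const_mul htail (Or.inr (by norm_num : (2:ENNReal) ≠ ⊤))
      simpa using this
    exact tendsto_of_tendsto_of_tendsto_of_le_of_le' tendsto_const_nhds h2tail
      (Eventually.of_forall fun n => zero_le) hbound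
  -- Markov bound on the target set
  have htarget : ∀ n : ℕ, 1 ≤ n →
      (μ {x | 9*c/16 ≤ |birkhoffAverage ℝ T (fun y => v y - w y) n x|}).toReal ≤ 1/9 := by
    intro n hn
    set d : X → ℝ := fun y => v y - w y with hddef
    have hdm : Measurable d := hvm.sub hwm
    have hAd_int : Integrable (fun x => |birkhoffAverage ℝ T d n x|) μ :=
      (integrable_birkhoffAverage hmp hdint n).abs
    have hMarkov := mul_meas_ge_le_integral_of_nonneg
      (ae_of_all μ fun x => abs_nonneg (birkhoffAverage ℝ T d n x)) hAd_int (9*c/16)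
    have hptwise : ∀ x, |birkhoffAverage ℝ T d n x| ≤ birkhoffAverage ℝ T (fun y => |d y|) n x := by
      intro x
      rw [birkhoffAverage, birkhoffAverage, smul_eq_mul, smul_eq_mul, abs_mul,
        abs_of_nonneg (show (0:ℝ) ≤ (n:ℝ)⁻¹ by positivity)]
      refine mul_le_mul_of_nonneg_left ?_ (by positivity)
      calc |birkhoffSum T d n x| ≤ ∑ k ∈ Finset.range n, |d (T^[k] x)| :=
            Finset.abs_sum_le_sum_abs _ _
        _ = birkhoffSum T (fun y => |d y|) n x := rfl
    have hint1 : ∫ x, |birkhoffAverage ℝ T d n x| ∂μ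
        ≤ ∫ x, birkhoffAverage ℝ T (fun y => |d y|) n x ∂μ :=
      integral_mono hAd_int (integrable_birkhoffAverage hmp hdint.abs n) hptwise
    have hint2 : ∫ x, birkhoffAverage ℝ T (fun y => |d y|) n x ∂μ = ∫ x, |d x| ∂μ :=
      integral_birkhoffAverage_eq hmp hdm.abs hdint.abs hn
    have hfinal : 9*c/16 * (μ {x | 9*c/16 ≤ |birkhoffAverage ℝ T d n x|}).toReal ≤ c/16 := by
      calc 9*c/16 * (μ {x | 9*c/16 ≤ |birkhoffAverage ℝ T d n x|}).toReal
          ≤ ∫ x, |birkhoffAverage ℝ T d n x| ∂μ := hMarkov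
        _ ≤ ∫ x, |d x| ∂μ := le_trans hint1 (le_of_eq hint2)
        _ ≤ c/16 := hdsmall.le
    have hnonneg : (0:ℝ) ≤ (μ {x | 9*c/16 ≤ |birkhoffAverage ℝ T d n x|}).toReal :=
      ENNReal.toReal_nonneg
    nlinarith
  -- combine
  have hev1 := hbad0.eventually_lt_const
    (show (0:ENNReal) < ENNReal.ofReal (1/4) from ENNReal.ofReal_pos.2 (by norm_num))
  have hev2 := hbad1.eventually_lt_const
    (show (0:ENNReal) < ENNReal.ofReal (1/4) from ENNReal.ofReal_pos.2 (by norm_num))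
  obtain ⟨n, hn1, hb0, hb1⟩ :
      ∃ n : ℕ, 1 ≤ n ∧ μ {x | c/4 ≤ |birkhoffAverage ℝ T v n x|} < ENNReal.ofReal (1/4)
        ∧ μ {x | c/8 ≤ dist (birkhoffAverage ℝ T w n x) (∫ x, w x ∂μ)} < ENNReal.ofReal (1/4) := by
    obtain ⟨n, h1, h2, h3⟩ := ((eventually_ge_atTop 1).and (hev1.and hev2)).exists
    exact ⟨n, h1, h2, h3⟩
  set B0 : Set X := {x | c/4 ≤ |birkhoffAverage ℝ T v n x|}
  set B1 : Set X := {x | c/8 ≤ dist (birkhoffAverage ℝ T w n x) (∫ x, w x ∂μ)}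
  set Tg : Set X := {x | 9*c/16 ≤ |birkhoffAverage ℝ T (fun y => v y - w y) n x|}
  have hcover : Set.univ ⊆ B0 ∪ B1 ∪ Tg := by
    intro x _
    by_cases h0 : x ∈ B0
    · exact Or.inl (Or.inl h0)
    by_cases h1 : x ∈ B1
    · exact Or.inl (Or.inr h1)
    refine Or.inr ?_
    show 9*c/16 ≤ |birkhoffAverage ℝ T (fun y => v y - w y) n x|
    have hsplit : birkhoffAverage ℝ T (fun y => v y - w y) n x
        = birkhoffAverage ℝ T v n x - birkhoffAverage ℝ T w n x := by
      simp only [birkhoffAverage, birkhoffSum, Finset.sum_sub_distrib, smul_sub]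
    have h0a : ¬ (c/4 ≤ |birkhoffAverage ℝ T v n x|) := h0
    have h0' : |birkhoffAverage ℝ T v n x| < c/4 := lt_of_not_ge h0a
    have h1' : |birkhoffAverage ℝ T w n x - ∫ x, w x ∂μ| < c/8 := by
      have h1a : ¬ (c/8 ≤ dist (birkhoffAverage ℝ T w n x) (∫ x, w x ∂μ)) := h1
      have := lt_of_not_ge h1a
      rwa [Real.dist_eq] at this
    have hv1 : birkhoffAverage ℝ T v n x < c/4 := lt_of_le_of_lt (le_abs_self _) h0'
    have hw1 : (∫ x, w x ∂μ) - birkhoffAverage ℝ T w n x < c/8 := by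
      have := neg_abs_le (birkhoffAverage ℝ T w n x - ∫ x, w x ∂μ)
      linarith
    have habs : birkhoffAverage ℝ T w n x - birkhoffAverage ℝ T v n x
        ≤ |birkhoffAverage ℝ T v n x - birkhoffAverage ℝ T w n x| := by
      rw [abs_sub_comm]
      exact le_abs_self _
    rw [hsplit]
    linarith
  have hTgfin : μ Tg ≠ ⊤ := measure_ne_top μ _
  have hB0fin : μ B0 ≠ ⊤ := measure_ne_top μ _
  have hB1fin : μ B1 ≠ ⊤ := measure_ne_top μ _
  have hsum : (1:ENNReal) ≤ μ B0 + μ B1 + μ Tg := by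
    calc (1:ENNReal) = μ Set.univ := (measure_univ (μ := μ)).symm
      _ ≤ μ (B0 ∪ B1 ∪ Tg) := measure_mono hcover
      _ ≤ μ (B0 ∪ B1) + μ Tg := measure_union_le _ _
      _ ≤ μ B0 + μ B1 + μ Tg := add_le_add_left (measure_union_le _ _) _
  have hreal : (1:ℝ) ≤ (μ B0).toReal + (μ B1).toReal + (μ Tg).toReal := by
    have hne : μ B0 + μ B1 + μ Tg ≠ ⊤ := by
      simp [ENNReal.add_eq_top, hB0fin, hB1fin, hTgfin]
    have := ENNReal.toReal_mono hne hsum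
    rwa [ENNReal.toReal_one, ENNReal.toReal_add (by simp [ENNReal.add_eq_top, hB0fin, hB1fin])
      hTgfin, ENNReal.toReal_add hB0fin hB1fin] at this
  have hb0r : (μ B0).toReal ≤ 1/4 := ENNReal.toReal_le_of_le_ofReal (by norm_num) hb0.le
  have hb1r : (μ B1).toReal ≤ 1/4 := ENNReal.toReal_le_of_le_ofReal (by norm_num) hb1.le
  have htgr : (μ Tg).toReal ≤ 1/9 := htarget n hn1
  linarith

lemma coboundary_integral_eq_zero [IsProbabilityMeasure μ] {T : X → X} (hT : Ergodic T μ)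
    {u v : X → ℝ} (hu : Measurable u) (hvm : Measurable v) (hvi : Integrable v μ)
    (hv : v =ᵐ[μ] fun x => u x - u (T x)) : ∫ x, v x ∂μ = 0 := by
  have h1 := coboundary_integral_nonpos hT hu hvm hvi hv
  have h2 := coboundary_integral_nonpos hT (u := fun x => -u x) (v := fun x => -v x)
    hu.neg hvm.neg hvi.neg (hv.mono fun x hx => by simp only [hx]; ring)
  rw [integral_neg] at h2
  linarith

end aux

open MeasureTheory

theorem stmt_1 {X : Type*} [MeasurableSpace X] (μ : Measure X) [IsProbabilityMeasure μ]
    (T : X → X) (hT : Ergodic T μ) (f : X → ℝ) (hf : Integrable f μ)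
    (hmean : ∫ x, f x ∂μ = 0) :
    (∀ᵐ x ∂μ, ¬ BddBelow (Set.range fun n : ℕ =>
        ∑ k ∈ Finset.range (n + 1), f (T^[k] x))) ∨
    (∃ g : X → ℝ, Measurable g ∧ ∀ᵐ x ∂μ, f x = g x - g (T x)) := by
  classical
  have hmp := hT.toMeasurePreserving
  have hTm : Measurable T := hmp.measurable
  set f' : X → ℝ := hf.1.aemeasurable.mk f with hf'def
  have hf'm : Measurable f' := hf.1.aemeasurable.measurable_mk
  have hff' : f =ᵐ[μ] f' := hf.1.aemeasurable.ae_eq_mk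
  have hf'i : Integrable f' μ := hf.congr hff'
  set S : ℕ → X → ℝ := fun n x => ∑ k ∈ Finset.range (n+1), f' (T^[k] x) with hSdef
  have hSm : ∀ n, Measurable (S n) := fun n =>
    Finset.measurable_sum _ fun k _ => hf'm.comp (hTm.iterate k)
  have hae : ∀ᵐ x ∂μ, ∀ k : ℕ, f (T^[k] x) = f' (T^[k] x) := by
    rw [ae_all_iff]
    intro k
    have := (hmp.iterate k).quasiMeasurePreserving.ae_eq hff'
    filter_upwards [this] with x hx
    simpa [Function.comp] using hx
  have hrange : ∀ᵐ x ∂μ,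
      (Set.range fun n : ℕ => ∑ k ∈ Finset.range (n+1), f (T^[k] x))
        = Set.range fun n : ℕ => S n x := by
    filter_upwards [hae] with x hx
    have hfx : (fun n : ℕ => ∑ k ∈ Finset.range (n+1), f (T^[k] x))
        = fun n : ℕ => S n x :=
      funext fun n => Finset.sum_congr rfl fun k _ => hx k
    rw [hfx]
  set E : Set X := {x | BddBelow (Set.range fun n : ℕ => S n x)} with hEdef
  have hEmeas : MeasurableSet E := by
    have hEeq : E = ⋃ m : ℤ, ⋂ n : ℕ, {x | (m : ℝ) ≤ S n x} := by
      ext x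
      simp only [hEdef, Set.mem_iUnion, Set.mem_iInter, Set.mem_setOf_eq]
      constructor
      · rintro ⟨b, hb⟩
        exact ⟨⌊b⌋, fun n => le_trans (Int.floor_le b) (hb ⟨n, rfl⟩)⟩
      · rintro ⟨m, hm⟩
        refine ⟨(m:ℝ), ?_⟩
        rintro y ⟨n, rfl⟩
        exact hm n
    rw [hEeq]
    exact MeasurableSet.iUnion fun m => MeasurableSet.iInter fun n =>
      measurableSet_le measurable_const (hSm n)
  have hSrec : ∀ (n : ℕ) (x : X), S n (T x) = S (n+1) x - f' x := by
    intro n x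
    have h2 : (∑ k ∈ Finset.range (n+1), f' (T^[k] (T x)))
        = ∑ k ∈ Finset.range (n+1), f' (T^[k+1] x) :=
      Finset.sum_congr rfl fun k _ => by rw [Function.iterate_succ_apply]
    have h3 : (∑ k ∈ Finset.range (n+2), f' (T^[k] x))
        = (∑ k ∈ Finset.range (n+1), f' (T^[k+1] x)) + f' (T^[0] x) :=
      Finset.sum_range_succ' (fun k => f' (T^[k] x)) (n+1)
    simp only [hSdef]
    rw [h2]
    rw [show n + 1 + 1 = n + 2 from rfl] at h3
    rw [h3]
    simp
  have hEinv : E ⊆ T ⁻¹' E := by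
    rintro x ⟨b, hb⟩
    refine ⟨b - f' x, ?_⟩
    rintro y ⟨n, rfl⟩
    show b - f' x ≤ S n (T x)
    rw [hSrec n x]
    have := hb ⟨n+1, rfl⟩
    exact sub_le_sub_right this _
  have hmeq : (T ⁻¹' E : Set X) =ᵐ[μ] E := by
    have hμeq : μ (T ⁻¹' E) = μ E := hmp.measure_preimage hEmeas.nullMeasurableSet
    exact (ae_eq_of_subset_of_measure_ge hEinv (le_of_eq hμeq) hEmeas.nullMeasurableSet
      (measure_ne_top μ _)).symm
  rcases hT.quasiErgodic.ae_empty_or_univ₀ hEmeas.nullMeasurableSet hmeq with hE0 | hE1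
  · -- E is a.e. empty : sums are a.e. unbounded below
    left
    have hnm : ∀ᵐ x ∂μ, x ∉ E := by
      rw [← measure_eq_zero_iff_ae_notMem]
      exact ae_eq_empty.mp hE0
    filter_upwards [hrange, hnm] with x hx1 hx2
    rw [hx1]
    exact hx2
  · -- E is a.e. full : construct the transfer function
    right
    have haeE : ∀ᵐ x ∂μ, x ∈ E := by
      have : μ Eᶜ = 0 := ae_eq_univ.mp hE1
      rw [ae_iff]
      exact this
    have haeTE : ∀ᵐ x ∂μ, T x ∈ E :=
      hmp.quasiMeasurePreserving.ae (p := fun y => y ∈ E) haeE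
    set h : X → ℝ := fun x => ⨅ n : ℕ, S n x with hhdef
    have hhm : Measurable h := Measurable.iInf fun n => hSm n
    have haeKey : ∀ᵐ x ∂μ, h x = min (f' x) (f' x + h (T x)) := by
      filter_upwards [haeE, haeTE] with x hxE hxTE
      have hbdd : BddBelow (Set.range fun n : ℕ => S n x) := hxE
      have hbddT : BddBelow (Set.range fun n : ℕ => S n (T x)) := hxTE
      have hS0 : S 0 x = f' x := by simp [hSdef]
      refine le_antisymm (le_min ?_ ?_) (le_ciInf ?_)
      · have := ciInf_le hbdd 0
        rwa [hS0] at this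
      · have hstep : h x - f' x ≤ ⨅ n : ℕ, S n (T x) := by
          refine le_ciInf fun n => ?_
          have h1 := ciInf_le hbdd (n+1)
          rw [hSrec n x]
          have : h x ≤ S (n+1) x := h1
          linarith
        have : h x - f' x ≤ h (T x) := hstep
        linarith
      · intro n
        match n with
        | 0 =>
          rw [hS0]
          exact min_le_left _ _
        | Nat.succ n =>
          have h1 : h (T x) ≤ S n (T x) := ciInf_le hbddT n
          rw [hSrec n x] at h1
          have : min (f' x) (f' x + h (T x)) ≤ f' x + h (T x) := min_le_right _ _
          have hgoal : min (f' x) (f' x + h (T x)) ≤ S (n+1) x := by linarith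
          exact hgoal
    set u : X → ℝ := fun x => min (h x) 0 with hudef
    set p : X → ℝ := fun x => max (h x) 0 with hpdef
    have hum : Measurable u := hhm.min measurable_const
    have hpm : Measurable p := hhm.max measurable_const
    have hup : ∀ x, u x + p x = h x := fun x => by
      have := min_add_max (h x) 0
      simpa [hudef, hpdef] using this
    have haeF : ∀ᵐ x ∂μ, f' x = h x - u (T x) := by
      filter_upwards [haeKey] with x hx
      have hmin : min (f' x) (f' x + h (T x)) = f' x + min 0 (h (T x)) := by
        rw [← min_add_add_left]
        simp
      rw [hmin] at hx
      have : u (T x) = min 0 (h (T x)) := by rw [hudef]; simp [min_comm]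
      rw [this]
      linarith
    have hple : ∀ᵐ x ∂μ, ‖p x‖ ≤ ‖f' x‖ := by
      filter_upwards [haeKey] with x hx
      have hhle : h x ≤ f' x := by
        rw [hx]; exact min_le_left _ _
      rw [Real.norm_eq_abs, Real.norm_eq_abs]
      rw [abs_of_nonneg (le_max_right _ _)]
      exact max_le (le_trans hhle (le_abs_self _)) (abs_nonneg _)
    have hpint : Integrable p μ := hf'i.abs.mono' hpm.aestronglyMeasurable
      (by filter_upwards [hple] with x hx; simpa [Real.norm_eq_abs] using hx)
    set v : X → ℝ := fun x => f' x - p x with hvdef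
    have hvm : Measurable v := hf'm.sub hpm
    have hvi : Integrable v μ := hf'i.sub hpint
    have hvcob : v =ᵐ[μ] fun x => u x - u (T x) := by
      filter_upwards [haeF] with x hx
      have := hup x
      simp only [hvdef]
      linarith
    have hv0 : ∫ x, v x ∂μ = 0 := coboundary_integral_eq_zero hT hum hvm hvi hvcob
    have hf'0 : ∫ x, f' x ∂μ = 0 := by
      rw [← integral_congr_ae hff']
      exact hmean
    have hp0 : ∫ x, p x ∂μ = 0 := by
      have : ∫ x, v x ∂μ = ∫ x, f' x ∂μ - ∫ x, p x ∂μ := integral_sub hf'i hpint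
      rw [hv0, hf'0] at this
      linarith
    have hpae : p =ᵐ[μ] 0 :=
      (integral_eq_zero_iff_of_nonneg_ae (ae_of_all _ fun x => le_max_right _ _) hpint).1 hp0
    refine ⟨u, hum, ?_⟩
    filter_upwards [hff', haeF, hpae] with x hx1 hx2 hx3
    have hupx := hup x
    have : p x = 0 := hx3
    rw [hx1, hx2]
    linarith
end

section
/- Let T be an ergodic measure-preserving transformation of a probability space (X, μ), f ∈ L¹(X,μ) with ∫ f dμ = 0, and suppose the set of points x for which the Birkhoff sums Sₙ(f,x) are bounded below has positive μ-measure. Then g(x) := inf_{n≥1} Sₙ(f,x) is finite μ-almost everywhere, and the function h(x) := g(Tx) − g(x) + f(x) is nonnegative μ-almost everywhere. -/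
open MeasureTheory

private lemma bddBelow_range_iff_rat (a : ℕ → ℝ) :
    BddBelow (Set.range a) ↔ ∃ q : ℚ, ∀ n, (q : ℝ) ≤ a n := by
  constructor
  · rintro ⟨b, hb⟩
    obtain ⟨q, hq⟩ := exists_rat_lt b
    exact ⟨q, fun n => hq.le.trans (hb ⟨n, rfl⟩)⟩
  · rintro ⟨q, hq⟩
    exact ⟨(q : ℝ), by rintro y ⟨n, rfl⟩; exact hq n⟩

theorem stmt_2 {X : Type*} [MeasurableSpace X] (μ : Measure X) [IsProbabilityMeasure μ]
    (T : X → X) (hT : Ergodic T μ) (f : X → ℝ) (hf : Integrable f μ)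
    (hmean : ∫ x, f x ∂μ = 0)
    (S : ℕ → X → ℝ)
    (hS : ∀ n x, S n x = ∑ k ∈ Finset.range n, f (T^[k] x))
    (hpos : 0 < μ {x | BddBelow (Set.range fun n : ℕ => S (n + 1) x)}) :
    (∀ᵐ x ∂μ, BddBelow (Set.range fun n : ℕ => S (n + 1) x)) ∧
    (∀ᵐ x ∂μ, 0 ≤ (⨅ n : ℕ, S (n + 1) (T x)) - (⨅ n : ℕ, S (n + 1) x) + f x) := by
  have hm := hf.aestronglyMeasurable
  set φ : X → ℝ := hm.mk f with hφdef
  have hφmeas : Measurable φ := hm.stronglyMeasurable_mk.measurable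
  have hφeq : f =ᵐ[μ] φ := hm.ae_eq_mk
  set S' : ℕ → X → ℝ := fun n x => ∑ k ∈ Finset.range n, φ (T^[k] x) with hS'def
  set A : Set X := {x | BddBelow (Set.range fun n : ℕ => S (n + 1) x)} with hA
  set A' : Set X := {x | BddBelow (Set.range fun n : ℕ => S' (n + 1) x)} with hA'
  have hTm : Measurable T := hT.toMeasurePreserving.measurable
  -- Key identity for S'
  have hkey : ∀ x n, S' (n + 1) (T x) = S' (n + 2) x - φ x := by
    intro x n
    have : S' (n + 2) x = (∑ k ∈ Finset.range (n + 1), φ (T^[k + 1] x)) + φ (T^[0] x) :=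
      Finset.sum_range_succ' _ (n + 1)
    simp only [Function.iterate_zero_apply] at this
    rw [this]
    simp only [hS'def]
    rw [add_sub_cancel_right]
    exact Finset.sum_congr rfl fun k _ => by rw [Function.iterate_succ_apply]
  -- A' is measurable
  have hA'meas : MeasurableSet A' := by
    have : A' = ⋃ q : ℚ, ⋂ n : ℕ, {x | (q : ℝ) ≤ S' (n + 1) x} := by
      ext x
      simp only [hA', Set.mem_setOf_eq, bddBelow_range_iff_rat, Set.mem_iUnion, Set.mem_iInter,
        Set.mem_setOf_eq]
    rw [this]
    refine MeasurableSet.iUnion fun q => MeasurableSet.iInter fun n => ?_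
    have hSm : Measurable (S' (n + 1)) := by
      apply Finset.measurable_sum
      intro k _
      exact hφmeas.comp (hTm.iterate k)
    exact measurableSet_le measurable_const hSm
  -- A' is invariant
  have hA'inv : T ⁻¹' A' = A' := by
    ext x
    simp only [Set.mem_preimage, hA', Set.mem_setOf_eq]
    constructor
    · rintro ⟨b, hb⟩
      refine ⟨min (b + φ x) (S' 1 x), ?_⟩
      rintro y ⟨n, rfl⟩
      cases n with
      | zero => exact min_le_right _ _
      | succ m =>
        refine le_trans (min_le_left _ _) ?_
        have h0 : b ≤ S' (m + 1) (T x) := hb ⟨m, rfl⟩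
        rw [hkey x m] at h0
        show b + φ x ≤ S' (m + 1 + 1) x
        linarith
    · rintro ⟨b, hb⟩
      refine ⟨b - φ x, ?_⟩
      rintro y ⟨n, rfl⟩
      show b - φ x ≤ S' (n + 1) (T x)
      rw [hkey x n]
      have : b ≤ S' (n + 1 + 1) x := hb ⟨n + 1, rfl⟩
      linarith
  -- A =ᵐ A'
  have hfk : ∀ᵐ x ∂μ, ∀ k : ℕ, f (T^[k] x) = φ (T^[k] x) := by
    rw [MeasureTheory.ae_all_iff]
    intro k
    exact ((hT.toMeasurePreserving.iterate k).quasiMeasurePreserving).ae_eq_comp hφeq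
  have hAA' : A =ᵐ[μ] A' := by
    filter_upwards [hfk] with x hx
    have hSeq : ∀ n, S (n + 1) x = S' (n + 1) x := by
      intro n
      rw [hS]
      exact Finset.sum_congr rfl fun k _ => hx k
    simp only [hA, hA', Set.mem_setOf_eq, eq_iff_iff]
    constructor
    · rintro ⟨b, hb⟩
      refine ⟨b, ?_⟩
      rintro y ⟨n, rfl⟩
      show b ≤ S' (n + 1) x
      rw [← hSeq n]
      exact hb ⟨n, rfl⟩
    · rintro ⟨b, hb⟩
      refine ⟨b, ?_⟩
      rintro y ⟨n, rfl⟩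
      show b ≤ S (n + 1) x
      rw [hSeq n]
      exact hb ⟨n, rfl⟩
  -- ergodicity: A' is null or conull
  have h01 := hT.toPreErgodic.ae_empty_or_univ hA'meas hA'inv
  have hA'pos : 0 < μ A' := by
    rwa [← measure_congr hAA']
  have hA'full : A' =ᵐ[μ] Set.univ := by
    rcases h01 with h | h
    · exfalso
      rw [measure_congr h] at hA'pos
      simp at hA'pos
    · exact h
  have hAfull : ∀ᵐ x ∂μ, x ∈ A := by
    have : A =ᵐ[μ] Set.univ := hAA'.trans hA'full
    filter_upwards [this.mem_iff] with x hx
    simp only [Set.mem_univ, iff_true] at hx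
    exact hx
  refine ⟨hAfull, ?_⟩
  -- second part
  filter_upwards [hAfull] with x hx
  have hSkey : ∀ n, S (n + 1) (T x) = S (n + 2) x - f x := by
    intro n
    have h2 : S (n + 2) x = (∑ k ∈ Finset.range (n + 1), f (T^[k + 1] x)) + f (T^[0] x) := by
      rw [hS]; exact Finset.sum_range_succ' _ (n + 1)
    simp only [Function.iterate_zero_apply] at h2
    rw [hS, h2, add_sub_cancel_right]
    exact Finset.sum_congr rfl fun k _ => by rw [Function.iterate_succ_apply]
  have hle : (⨅ n : ℕ, S (n + 1) x) - f x ≤ ⨅ n : ℕ, S (n + 1) (T x) := by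
    refine le_ciInf fun n => ?_
    rw [hSkey n]
    have : (⨅ m : ℕ, S (m + 1) x) ≤ S (n + 1 + 1) x := ciInf_le hx (n + 1)
    linarith
  linarith
end

section
/- Let T be an invertible ergodic measure-preserving transformation of a probability space (X, μ) and f ∈ L¹(X,μ) with ∫ f dμ = 0 such that f is not a measurable coboundary for T. Then for μ-almost every x there exists n ≥ 1 with Sₙ(f,x) ≤ 0, where Sₙ(f,x) = Σ_{k=0}^{n-1} f(Tᵏx). -/
open MeasureTheory Filter Set

section Aux

variable {X : Type*} [MeasurableSpace X] {μ : Measure X} {T : X → X} {φ : X → ℝ}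
set_option linter.unusedSectionVars false

private lemma measurable_birkhoff (hT : Measurable T) (hφ : Measurable φ) (n : ℕ) :
    Measurable (birkhoffSum T φ n) :=
  Finset.measurable_sum _ fun k _ => hφ.comp (hT.iterate k)

private lemma integrable_comp_mp {S : X → X} (hS : MeasurePreserving S μ μ)
    {ψ : X → ℝ} (hψ : Integrable ψ μ) : Integrable (fun x => ψ (S x)) μ := by
  have hg : AEStronglyMeasurable ψ (Measure.map S μ) := by rw [hS.map_eq]; exact hψ.1
  have h2 : Integrable ψ (Measure.map S μ) := by rw [hS.map_eq]; exact hψ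
  exact (integrable_map_measure hg hS.measurable.aemeasurable).mp h2

private lemma integral_comp_mp (hS : MeasurePreserving T μ μ)
    {ψ : X → ℝ} (hψ : AEStronglyMeasurable ψ μ) : ∫ x, ψ (T x) ∂μ = ∫ x, ψ x ∂μ := by
  have hg : AEStronglyMeasurable ψ (Measure.map T μ) := by rw [hS.map_eq]; exact hψ
  rw [← integral_map hS.measurable.aemeasurable hg, hS.map_eq]

private lemma integrable_birkhoff (hTm : MeasurePreserving T μ μ) (hφ : Integrable φ μ)
    (n : ℕ) : Integrable (birkhoffSum T φ n) μ :=
  integrable_finset_sum _ fun k _ => integrable_comp_mp (hTm.iterate k) hφ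

/-- `maxS T φ n x = max_{1 ≤ k ≤ n+1} S_k(φ)(x)`. -/
private noncomputable def maxS (T : X → X) (φ : X → ℝ) : ℕ → X → ℝ
  | 0 => birkhoffSum T φ 1
  | n+1 => fun x => max (maxS T φ n x) (birkhoffSum T φ (n+2) x)

private lemma measurable_maxS (hT : Measurable T) (hφ : Measurable φ) :
    ∀ n, Measurable (maxS T φ n)
  | 0 => measurable_birkhoff hT hφ 1
  | n+1 => ((measurable_maxS hT hφ n).max (measurable_birkhoff hT hφ (n+2)))

private lemma integrable_maxS (hTm : MeasurePreserving T μ μ) (hφ : Integrable φ μ) :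
    ∀ n, Integrable (maxS T φ n) μ
  | 0 => integrable_birkhoff hTm hφ 1
  | n+1 => by
      have := (integrable_maxS hTm hφ n).sup (integrable_birkhoff hTm hφ (n+2))
      exact this.congr (Eventually.of_forall fun x => rfl)

private lemma birkhoff_le_maxS (x : X) : ∀ n k, k ≤ n →
    birkhoffSum T φ (k+1) x ≤ maxS T φ n x := by
  intro n
  induction n with
  | zero => intro k hk; interval_cases k; exact le_rfl
  | succ n ih =>
    intro k hk
    rcases Nat.lt_succ_iff_lt_or_eq.mp (Nat.lt_succ_of_le hk) with h | h
    · exact (ih k (Nat.lt_succ_iff.mp h)).trans (le_max_left _ _)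
    · subst h; exact le_max_right _ _

private lemma maxS_mono (x : X) {m n : ℕ} (hmn : m ≤ n) : maxS T φ m x ≤ maxS T φ n x := by
  induction n with
  | zero => simp_all
  | succ n ih =>
    rcases Nat.lt_succ_iff_lt_or_eq.mp (Nat.lt_succ_of_le hmn) with h | h
    · exact (ih (Nat.lt_succ_iff.mp h)).trans (le_max_left _ _)
    · subst h; exact le_rfl

private lemma maxS_key : ∀ n (x : X), maxS T φ n x ≤ φ x + max 0 (maxS T φ n (T x)) := by
  intro n
  induction n with
  | zero =>
    intro x
    have : maxS T φ 0 x = φ x := birkhoffSum_one T φ x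
    rw [this]
    exact le_add_of_nonneg_right (le_max_left _ _)
  | succ n ih =>
    intro x
    apply max_le
    · exact (ih x).trans (by gcongr; exact le_max_left _ _)
    · have h1 : birkhoffSum T φ (n+2) x = φ x + birkhoffSum T φ (n+1) (T x) :=
        birkhoffSum_succ' T φ (n+1) x
      rw [h1]
      gcongr
      exact (birkhoff_le_maxS (T x) n n le_rfl).trans
        ((le_max_left _ _).trans (le_max_right _ _))

private lemma maxS_exists_pos (x : X) : ∀ n, 0 < maxS T φ n x →
    ∃ k, 0 < birkhoffSum T φ (k+1) x := by
  intro n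
  induction n with
  | zero => intro hx; exact ⟨0, hx⟩
  | succ n ih =>
    intro hx
    rcases lt_max_iff.mp hx with h | h
    · exact ih h
    · exact ⟨n+1, h⟩

private lemma maximal_aux [IsFiniteMeasure μ] (hT : Measurable T) (hTm : MeasurePreserving T μ μ)
    (hφm : Measurable φ) (hφ : Integrable φ μ) (n : ℕ) :
    0 ≤ ∫ x in {x | 0 < maxS T φ n x}, φ x ∂μ := by
  set E := {x | 0 < maxS T φ n x} with hE
  have hEm : MeasurableSet E := measurableSet_lt measurable_const (measurable_maxS hT hφm n)
  set P : X → ℝ := fun x => max 0 (maxS T φ n x) with hP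
  have hPm : Measurable P := measurable_const.max (measurable_maxS hT hφm n)
  have hPint : Integrable P μ := by
    have := (integrable_const (0:ℝ)).sup (integrable_maxS hTm hφ n)
    exact this.congr (Eventually.of_forall fun x => rfl)
  have hPTint : Integrable (fun x => P (T x)) μ := integrable_comp_mp hTm hPint
  have key : ∀ x ∈ E, P x - P (T x) ≤ φ x := by
    intro x hx
    have h1 : maxS T φ n x ≤ φ x + P (T x) := maxS_key n x
    have h2 : P x = maxS T φ n x := max_eq_right (le_of_lt hx)
    linarith
  have key2 : ∀ x ∈ Eᶜ, P x - P (T x) ≤ 0 := by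
    intro x hx
    have h2 : P x = 0 := max_eq_left (not_lt.mp hx)
    have h3 : 0 ≤ P (T x) := le_max_left _ _
    linarith
  have hint : Integrable (fun x => P x - P (T x)) μ := hPint.sub hPTint
  have h3 : ∫ x, (P x - P (T x)) ∂μ = 0 := by
    rw [integral_sub hPint hPTint, integral_comp_mp hTm hPm.aestronglyMeasurable, sub_self]
  have hadd := integral_add_compl hEm hint
  have h5 : ∫ x in Eᶜ, (P x - P (T x)) ∂μ ≤ 0 := setIntegral_nonpos hEm.compl key2
  have h4 : 0 ≤ ∫ x in E, (P x - P (T x)) ∂μ := by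
    rw [h3] at hadd; linarith
  calc (0:ℝ) ≤ ∫ x in E, (P x - P (T x)) ∂μ := h4
    _ ≤ ∫ x in E, φ x ∂μ :=
        setIntegral_mono_on hint.integrableOn hφ.integrableOn hEm key

private lemma maximal [IsFiniteMeasure μ] (hT : Measurable T) (hTm : MeasurePreserving T μ μ)
    (hφm : Measurable φ) (hφ : Integrable φ μ) :
    0 ≤ ∫ x in {x | ∃ n, 1 ≤ n ∧ 0 < birkhoffSum T φ n x}, φ x ∂μ := by
  have hU : {x | ∃ n, 1 ≤ n ∧ 0 < birkhoffSum T φ n x} = ⋃ n, {x | 0 < maxS T φ n x} := by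
    ext x
    simp only [mem_setOf_eq, mem_iUnion]
    constructor
    · rintro ⟨n, hn1, hn⟩
      obtain ⟨m, rfl⟩ : ∃ m, n = m + 1 := ⟨n - 1, by omega⟩
      exact ⟨m, lt_of_lt_of_le hn (birkhoff_le_maxS x m m le_rfl)⟩
    · rintro ⟨n, hn⟩
      obtain ⟨k, hk⟩ := maxS_exists_pos x n hn
      exact ⟨k+1, by omega, hk⟩
  rw [hU]
  have hEm : ∀ n, MeasurableSet {x | 0 < maxS T φ n x} := fun n =>
    measurableSet_lt measurable_const (measurable_maxS hT hφm n)
  have hmono : Monotone fun n => {x | 0 < maxS T φ n x} := fun a b hab x hx =>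
    lt_of_lt_of_le hx (maxS_mono x hab)
  have htend := tendsto_setIntegral_of_monotone hEm hmono hφ.integrableOn
  exact ge_of_tendsto' htend fun n => maximal_aux hT hTm hφm hφ n

private lemma integral_nonneg_of_ae_exists [IsFiniteMeasure μ] (hT : Measurable T) (hTm : MeasurePreserving T μ μ)
    (hφm : Measurable φ) (hφ : Integrable φ μ)
    (hae : ∀ᵐ x ∂μ, ∃ n, 1 ≤ n ∧ 0 < birkhoffSum T φ n x) : 0 ≤ ∫ x, φ x ∂μ := by
  set E := {x | ∃ n, 1 ≤ n ∧ 0 < birkhoffSum T φ n x} with hE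
  have hEm : MeasurableSet E := by
    have : E = ⋃ n, {x | 0 < birkhoffSum T φ (n+1) x} := by
      ext x
      simp only [hE, mem_setOf_eq, mem_iUnion]
      constructor
      · rintro ⟨n, hn1, hn⟩; exact ⟨n - 1, by rwa [Nat.sub_add_cancel hn1]⟩
      · rintro ⟨n, hn⟩; exact ⟨n+1, by omega, hn⟩
    rw [this]
    exact MeasurableSet.iUnion fun n =>
      measurableSet_lt measurable_const (measurable_birkhoff hT hφm (n+1))
  have hcompl : μ Eᶜ = 0 := by
    rw [hE, compl_setOf]
    exact ae_iff.mp hae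
  have hadd := integral_add_compl hEm hφ
  have hzero : ∫ x in Eᶜ, φ x ∂μ = 0 := by
    rw [Measure.restrict_eq_zero.mpr hcompl, integral_zero_measure]
  rw [hzero, add_zero] at hadd
  rw [← hadd]
  exact maximal hT hTm hφm hφ

/-- Order isomorphism of `EReal` given by adding a real constant. -/
private noncomputable def erealAddIso (r : ℝ) : EReal ≃o EReal where
  toFun x := (r : EReal) + x
  invFun x := ((-r : ℝ) : EReal) + x
  left_inv x := by
    show ((-r : ℝ) : EReal) + ((r : EReal) + x) = x
    rw [← add_assoc, ← EReal.coe_add]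
    norm_num
  right_inv x := by
    show (r : EReal) + (((-r : ℝ) : EReal) + x) = x
    rw [← add_assoc, ← EReal.coe_add]
    norm_num
  map_rel_iff' := by
    intro a b
    show (r : EReal) + a ≤ (r : EReal) + b ↔ a ≤ b
    constructor
    · intro h
      have h2 := add_le_add_right h ((-r : ℝ) : EReal)
      rwa [← add_assoc, ← add_assoc, ← EReal.coe_add, neg_add_cancel, EReal.coe_zero,
        zero_add, zero_add] at h2
    · intro h
      exact add_le_add_right h _

private lemma ereal_add_iInf (r : ℝ) (a : ℕ → EReal) :
    (r : EReal) + ⨅ n, a n = ⨅ n, ((r : EReal) + a n) :=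
  (erealAddIso r).map_iInf a

private lemma ereal_add_min (r : ℝ) (a b : EReal) :
    (r : EReal) + min a b = min ((r : EReal) + a) ((r : EReal) + b) := by
  rcases le_total a b with hab | hab
  · rw [min_eq_left hab, min_eq_left (add_le_add_right hab _)]
  · rw [min_eq_right hab, min_eq_right (add_le_add_right hab _)]

end Aux

theorem stmt_5 {X : Type*} [MeasurableSpace X] (μ : Measure X) [IsProbabilityMeasure μ]
    (T : X → X) (hT : Ergodic T μ) (hinv : Function.Bijective T)
    (f : X → ℝ) (hf : Integrable f μ) (hmean : ∫ x, f x ∂μ = 0)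
    (hnc : ¬ ∃ g : X → ℝ, Measurable g ∧ f =ᵐ[μ] fun x => g x - g (T x)) :
    ∀ᵐ x ∂μ, ∃ n : ℕ, 1 ≤ n ∧ ∑ k ∈ Finset.range n, f (T^[k] x) ≤ 0 := by
  by_contra hcon
  have hTm : MeasurePreserving T μ μ := hT.toMeasurePreserving
  have hTmeas : Measurable T := hTm.measurable
  -- measurable representative of f
  obtain ⟨f', hf'meas, hff'⟩ : ∃ f' : X → ℝ, Measurable f' ∧ f =ᵐ[μ] f' := by
    rcases hf.1 with ⟨f', hsm, hae⟩
    exact ⟨f', hsm.measurable, hae⟩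
  have hf' : Integrable f' μ := hf.congr hff'
  have hmean' : ∫ x, f' x ∂μ = 0 := by rw [← integral_congr_ae hff']; exact hmean
  have hiter : ∀ᵐ x ∂μ, ∀ k : ℕ, f (T^[k] x) = f' (T^[k] x) := by
    rw [ae_all_iff]
    intro k
    exact (hTm.iterate k).quasiMeasurePreserving.ae_eq_comp hff'
  have hSeq : ∀ᵐ x ∂μ, ∀ n, birkhoffSum T f n x = birkhoffSum T f' n x :=
    hiter.mono fun x hx n => Finset.sum_congr rfl fun k _ => hx k
  have hconP : ¬ ∀ᵐ x ∂μ, ∃ n, 1 ≤ n ∧ birkhoffSum T f' n x ≤ 0 := by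
    intro hae
    apply hcon
    filter_upwards [hae, hSeq] with x hx hsx
    obtain ⟨n, h1, h2⟩ := hx
    refine ⟨n, h1, ?_⟩
    have : (∑ k ∈ Finset.range n, f (T^[k] x)) = birkhoffSum T f n x := rfl
    rw [this, hsx n]
    exact h2
  -- G = inf of partial sums, in EReal
  set G : X → EReal := fun x => ⨅ n : ℕ, ((birkhoffSum T f' (n+1) x : ℝ) : EReal) with hGdef
  have hGmeas : Measurable G :=
    Measurable.iInf fun n => (measurable_birkhoff hTmeas hf'meas (n+1)).coe_real_ereal
  have hGtop : ∀ x, G x ≠ ⊤ := fun x =>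
    ne_top_of_le_ne_top (EReal.coe_ne_top _) (iInf_le _ 0)
  have hGid : ∀ x, G x = (f' x : EReal) + min 0 (G (T x)) := by
    intro x
    have h1 : G x = min ((birkhoffSum T f' 1 x : ℝ) : EReal)
        (⨅ n : ℕ, ((birkhoffSum T f' (n+2) x : ℝ) : EReal)) := by
      apply le_antisymm
      · exact le_min (iInf_le _ 0) (le_iInf fun n => iInf_le _ (n+1))
      · apply le_iInf
        intro n
        cases n with
        | zero => exact min_le_left _ _
        | succ m => exact (min_le_right _ _).trans (iInf_le _ m)
    have h2 : (⨅ n : ℕ, ((birkhoffSum T f' (n+2) x : ℝ) : EReal))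
        = (f' x : EReal) + G (T x) := by
      rw [hGdef]
      dsimp only
      rw [ereal_add_iInf]
      refine iInf_congr fun n => ?_
      rw [birkhoffSum_succ' T f' (n+1) x, EReal.coe_add]
    rw [h1, h2, birkhoffSum_one, ereal_add_min, add_zero]
  -- the set where G = ⊥ is exactly invariant and null
  set N : Set X := {x | G x = ⊥} with hNdef
  have hNmeas : MeasurableSet N := hGmeas (measurableSet_singleton ⊥)
  have hNinv : T ⁻¹' N = N := by
    ext x
    simp only [mem_preimage, hNdef, mem_setOf_eq]
    constructor
    · intro hbot
      rw [hGid x, hbot, min_eq_right bot_le, EReal.add_bot]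
    · intro hbot
      by_contra hc
      have hmne : min 0 (G (T x)) ≠ ⊥ := by
        rcases le_total (0 : EReal) (G (T x)) with hle | hle
        · rw [min_eq_left hle]; exact EReal.zero_ne_bot
        · rw [min_eq_right hle]; exact hc
      have hmnt : min 0 (G (T x)) ≠ ⊤ :=
        ne_top_of_le_ne_top (EReal.zero_ne_top) (min_le_left _ _)
      have : G x ≠ ⊥ := by
        rw [hGid x, ← EReal.coe_toReal hmnt hmne, ← EReal.coe_add]
        exact EReal.coe_ne_bot _
      exact this hbot
  have hN0 : μ N = 0 := by
    rcases hT.toPreErgodic.ae_empty_or_univ hNmeas hNinv with hc | hc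
    · exact ae_eq_empty.mp hc
    · exfalso
      have hBsub : {x | ¬ ∃ n, 1 ≤ n ∧ birkhoffSum T f' n x ≤ 0} ⊆ Nᶜ := by
        intro x hx
        push_neg at hx
        have hpos : (0 : EReal) ≤ G x := le_iInf fun n => by
          have h := hx (n+1) (Nat.succ_le_succ (Nat.zero_le n))
          exact_mod_cast h.le
        intro hmem
        have : G x = ⊥ := hmem
        rw [this] at hpos
        exact absurd hpos (by simp)
      have hμB : μ {x | ¬ ∃ n, 1 ≤ n ∧ birkhoffSum T f' n x ≤ 0} ≠ 0 := by
        intro h0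
        exact hconP (ae_iff.mpr h0)
      exact hμB (measure_mono_null hBsub (ae_eq_univ.mp hc))
  have hNae : ∀ᵐ x ∂μ, x ∉ N := by
    rw [ae_iff]
    simpa [not_not] using hN0
  have hNiter : ∀ x, x ∉ N → ∀ k, T^[k] x ∉ N := by
    intro x hx k
    induction k with
    | zero => simpa using hx
    | succ k ih =>
      rw [Function.iterate_succ_apply']
      intro hmem
      exact ih (hNinv ▸ (hmem : T^[k] x ∈ T ⁻¹' N))
  -- real-valued transfer function
  set g : X → ℝ := fun x => (G x).toReal with hgdef
  have hgmeas : Measurable g := measurable_ereal_toReal.comp hGmeas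
  set hfun : X → ℝ := fun x => min (g x) 0 with hhdef
  have hhmeas : Measurable hfun := hgmeas.min measurable_const
  have hhnonpos : ∀ x, hfun x ≤ 0 := fun x => min_le_right _ _
  have hid : ∀ x, x ∉ N → f' x = max (g x) 0 + (hfun x - hfun (T x)) := by
    intro x hx
    have hxb : G x ≠ ⊥ := hx
    have hxT : T x ∉ N := by
      have := hNiter x hx 1
      simpa using this
    have hxTb : G (T x) ≠ ⊥ := hxT
    have h1 : G x = ((g x : ℝ) : EReal) := (EReal.coe_toReal (hGtop x) hxb).symm
    have h2 : G (T x) = ((g (T x) : ℝ) : EReal) := (EReal.coe_toReal (hGtop _) hxTb).symm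
    have h3 := hGid x
    rw [h1, h2] at h3
    have h4 : min (0 : EReal) ((g (T x) : ℝ) : EReal) = ((min 0 (g (T x)) : ℝ) : EReal) := by
      rcases le_total (0:ℝ) (g (T x)) with hle | hle
      · rw [min_eq_left (by exact_mod_cast hle), min_eq_left hle, EReal.coe_zero]
      · rw [min_eq_right (by exact_mod_cast hle), min_eq_right hle]
    rw [h4, ← EReal.coe_add] at h3
    have h5 : g x = f' x + min 0 (g (T x)) := by exact_mod_cast h3
    have h5' : g x = f' x + min (g (T x)) 0 := by rwa [min_comm] at h5
    have h6 : max (g x) 0 + min (g x) 0 = g x := by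
      rcases le_total (g x) 0 with hc | hc
      · rw [max_eq_right hc, min_eq_left hc, zero_add]
      · rw [max_eq_left hc, min_eq_right hc, add_zero]
    simp only [hhdef]
    linarith
  -- truncated positive part
  set u : X → ℝ := fun x => min (max (g x) 0) 1 with hudef
  have humeas : Measurable u := (hgmeas.max measurable_const).min measurable_const
  have hu01 : ∀ x, 0 ≤ u x ∧ u x ≤ 1 := fun x =>
    ⟨le_min (le_max_right _ _) zero_le_one, min_le_right _ _⟩
  have huint : Integrable u μ := by
    apply Integrable.mono' (integrable_const (1:ℝ)) humeas.aestronglyMeasurable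
    refine Eventually.of_forall fun x => ?_
    rw [Real.norm_eq_abs, abs_le]
    exact ⟨by linarith [(hu01 x).1], (hu01 x).2⟩
  have hSineq : ∀ x, x ∉ N → ∀ n,
      birkhoffSum T u n x + hfun x - hfun (T^[n] x) ≤ birkhoffSum T f' n x := by
    intro x hx n
    have key : birkhoffSum T f' n x
        = birkhoffSum T (fun y => max (g y) 0) n x + (hfun x - hfun (T^[n] x)) := by
      induction n with
      | zero => simp [birkhoffSum_zero]
      | succ n ih =>
        rw [birkhoffSum_succ, birkhoffSum_succ, ih, hid (T^[n] x) (hNiter x hx n),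
          Function.iterate_succ_apply']
        ring
    rw [key]
    have hb : birkhoffSum T u n x ≤ birkhoffSum T (fun y => max (g y) 0) n x :=
      Finset.sum_le_sum fun k _ => min_le_left _ _
    linarith
  set c : ℝ := ∫ x, u x ∂μ with hcdef
  have hc0 : 0 ≤ c := integral_nonneg fun x => (hu01 x).1
  by_cases hcpos : 0 < c
  · -- c > 0 : contradiction via the maximal ergodic lemma
    exfalso
    set w : X → ℝ := fun x => f' x - u x + c/2 with hwdef
    have hwmeas : Measurable w := (hf'meas.sub humeas).add_const _
    have hwint : Integrable w μ := by
      have : Integrable (fun x => f' x - u x) μ := hf'.sub huint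
      exact this.add (integrable_const _)
    have hwval : ∫ x, w x ∂μ = -c/2 := by
      have hsub : Integrable (fun x => f' x - u x) μ := hf'.sub huint
      rw [hwdef]
      rw [integral_add hsub (integrable_const _), integral_sub hf' huint,
        integral_const, hmean']
      simp [measure_univ]
      ring
    have hSw : ∀ x n, birkhoffSum T w n x
        = birkhoffSum T f' n x - birkhoffSum T u n x + n * (c/2) := by
      intro x n
      simp only [hwdef, birkhoffSum, Finset.sum_add_distrib, Finset.sum_sub_distrib,
        Finset.sum_const, Finset.card_range, nsmul_eq_mul]
    have hae : ∀ᵐ x ∂μ, ∃ n, 1 ≤ n ∧ 0 < birkhoffSum T w n x := by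
      filter_upwards [hNae] with x hx
      obtain ⟨n, hn⟩ := exists_nat_gt ((1 - hfun x) / (c/2))
      have hc2 : (0:ℝ) < c/2 := by linarith
      have hposq : (0:ℝ) < (1 - hfun x) / (c/2) :=
        div_pos (by linarith [hhnonpos x]) hc2
      have hn1 : 1 ≤ n := by
        rcases Nat.eq_zero_or_pos n with rfl | h
        · exfalso; push_cast at hn; linarith
        · exact h
      refine ⟨n, hn1, ?_⟩
      have h1 := hSineq x hx n
      have h2 : (1 - hfun x) < n * (c/2) := by
        rw [div_lt_iff₀ hc2] at hn
        linarith
      rw [hSw x n]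
      have h3 := hhnonpos (T^[n] x)
      linarith
    have hge := integral_nonneg_of_ae_exists hTmeas hTm hwmeas hwint hae
    rw [hwval] at hge
    linarith
  · -- c = 0 : f is a coboundary
    have hceq : c = 0 := le_antisymm (not_lt.mp hcpos) hc0
    have hu0 : u =ᵐ[μ] 0 := by
      have := (integral_eq_zero_iff_of_nonneg (fun x => (hu01 x).1) huint).mp
        (by rw [← hcdef]; exact hceq)
      exact this
    apply hnc
    refine ⟨hfun, hhmeas, ?_⟩
    filter_upwards [hff', hNae, hu0] with x hxf hxN hxu
    have hmax : max (g x) 0 = 0 := by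
      have hux : min (max (g x) 0) 1 = 0 := hxu
      rcases le_total (max (g x) 0) 1 with hle | hle
      · rwa [min_eq_left hle] at hux
      · rw [min_eq_right hle] at hux; norm_num at hux
    rw [hxf, hid x hxN, hmax, zero_add]
end

section
/- Let T be an ergodic measure-preserving transformation of a probability space (X,μ) and suppose f = g − g∘T almost everywhere for a measurable function g finite a.e. Then for μ-almost every x there exists n ≥ 1 such that Sₙ(f,x) = g(x) − g(Tⁿx) ≤ 0. -/
open MeasureTheory Filter

/-- For an ergodic map of a probability space, a.e. point visits any set of
positive measure at some positive time (in fact frequently). -/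
lemma ergodic_ae_frequently_visit {X : Type*} [MeasurableSpace X] (μ : Measure X)
    [IsProbabilityMeasure μ] (T : X → X) (hT : Ergodic T μ) {s : Set X}
    (hs : MeasurableSet s) (h0 : μ s ≠ 0) :
    ∀ᵐ x ∂μ, ∃ᶠ n in atTop, T^[n] x ∈ s := by
  set B : Set X := {x | ∃ᶠ n in atTop, T^[n] x ∈ s} with hBdef
  have hmeasT : Measurable T := hT.toMeasurePreserving.measurable
  have hBeq : B = ⋂ N : ℕ, ⋃ n : ℕ, ⋃ _ : N ≤ n, T^[n] ⁻¹' s := by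
    ext x
    simp only [hBdef, Set.mem_setOf_eq, frequently_atTop, Set.mem_iInter, Set.mem_iUnion,
      Set.mem_preimage]
    constructor
    · intro h N; obtain ⟨n, hn, hns⟩ := h N; exact ⟨n, hn, hns⟩
    · intro h N; obtain ⟨n, hn, hns⟩ := h N; exact ⟨n, hn, hns⟩
  have hBmeas : MeasurableSet B := by
    rw [hBeq]
    exact MeasurableSet.iInter fun N => MeasurableSet.iUnion fun n =>
      MeasurableSet.iUnion fun _ => (hmeasT.iterate n) hs
  have hBinv : T ⁻¹' B = B := by
    ext x
    simp only [Set.mem_preimage, hBdef, Set.mem_setOf_eq, frequently_atTop]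
    constructor
    · intro h N
      obtain ⟨n, hn, hns⟩ := h N
      refine ⟨n + 1, by omega, ?_⟩
      rwa [Function.iterate_succ_apply]
    · intro h N
      obtain ⟨n, hn, hns⟩ := h (N + 1)
      refine ⟨n - 1, by omega, ?_⟩
      have heq : T^[n - 1] (T x) = T^[n] x := by
        rw [← Function.iterate_succ_apply]
        congr 1
        omega
      rw [heq]
      exact hns
  have hret : ∀ᵐ x ∂μ, x ∈ s → ∃ᶠ n in atTop, T^[n] x ∈ s :=
    hT.toMeasurePreserving.conservative.ae_mem_imp_frequently_image_mem hs.nullMeasurableSet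
  rcases hT.ae_empty_or_univ hBmeas hBinv with hB | hB
  · exfalso
    have h1 : ∀ᵐ x ∂μ, x ∉ B := by
      have : μ B = 0 := by
        calc μ B = μ (∅ : Set X) := measure_congr hB
        _ = 0 := measure_empty
      exact measure_eq_zero_iff_ae_notMem.mp this
    have h2 : ∀ᵐ x ∂μ, x ∉ s := by
      filter_upwards [h1, hret] with x hx1 hx2
      intro hxs
      exact hx1 (hx2 hxs)
    exact h0 (measure_eq_zero_iff_ae_notMem.mpr h2)
  · have : μ Bᶜ = 0 := ae_eq_univ.mp hB
    filter_upwards [measure_eq_zero_iff_ae_notMem.mp this] with x hx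
    exact Classical.not_not.mp hx

theorem stmt_6 {X : Type*} [MeasurableSpace X] (μ : Measure X) [IsProbabilityMeasure μ]
    (T : X → X) (hT : Ergodic T μ) (f g : X → ℝ) (hg : Measurable g)
    (hcob : ∀ᵐ x ∂μ, f x = g x - g (T x)) :
    ∀ᵐ x ∂μ, ∃ n : ℕ, 1 ≤ n ∧ ∑ k ∈ Finset.range n, f (T^[k] x) ≤ 0 := by
  have hmeasT : Measurable T := hT.toMeasurePreserving.measurable
  -- the cocycle identity holds along orbits a.e.
  have horb : ∀ᵐ x ∂μ, ∀ k : ℕ, f (T^[k] x) = g (T^[k] x) - g (T^[k + 1] x) := by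
    rw [ae_all_iff]
    intro k
    have := (hT.toMeasurePreserving.iterate k).quasiMeasurePreserving.tendsto_ae.eventually hcob
    filter_upwards [this] with x hx
    rw [Function.iterate_succ_apply']
    simpa using hx
  -- telescoping
  have htel : ∀ x : X, (∀ k : ℕ, f (T^[k] x) = g (T^[k] x) - g (T^[k + 1] x)) →
      ∀ n : ℕ, ∑ k ∈ Finset.range n, f (T^[k] x) = g x - g (T^[n] x) := by
    intro x hx n
    induction n with
    | zero => simp
    | succ n ih => rw [Finset.sum_range_succ, ih, hx n]; ring
  set M : EReal := essSup (fun y => (g y : EReal)) μ with hM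
  have hle : ∀ᵐ x ∂μ, (g x : EReal) ≤ M := ae_le_essSup
  -- the "max" set
  set E : Set X := {y | M ≤ (g y : EReal)} with hE
  have hEmeas : MeasurableSet E := hg.coe_real_ereal measurableSet_Ici
  have hretE : ∀ᵐ x ∂μ, x ∈ E → ∃ᶠ n in atTop, T^[n] x ∈ E :=
    hT.toMeasurePreserving.conservative.ae_mem_imp_frequently_image_mem hEmeas.nullMeasurableSet
  -- visiting sets {q < g} of positive measure
  have hvisit : ∀ᵐ x ∂μ, ∀ q : ℚ, μ {y | (q : ℝ) < g y} ≠ 0 →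
      ∃ᶠ n in atTop, T^[n] x ∈ {y | (q : ℝ) < g y} := by
    rw [ae_all_iff]
    intro q
    by_cases hq : μ {y | (q : ℝ) < g y} = 0
    · filter_upwards with x h; exact absurd hq h
    · filter_upwards [ergodic_ae_frequently_visit μ T hT
        (hg measurableSet_Ioi : MeasurableSet {y | (q : ℝ) < g y}) hq] with x hx _
      exact hx
  filter_upwards [horb, hle, hretE, hvisit] with x hx hxle hxE hxvis
  by_cases hcase : (g x : EReal) < M
  · -- choose a rational between g x and M
    obtain ⟨q, hq1, hq2⟩ := EReal.exists_rat_btwn_of_lt hcase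
    have hpos : μ {y | (q : ℝ) < g y} ≠ 0 := by
      intro h0
      have hae : ∀ᵐ y ∂μ, (g y : EReal) ≤ ((q : ℝ) : EReal) := by
        filter_upwards [measure_eq_zero_iff_ae_notMem.mp h0] with y hy
        exact_mod_cast EReal.coe_le_coe_iff.mpr (not_lt.mp hy)
      have : M ≤ ((q : ℝ) : EReal) := essSup_le_of_ae_le _ hae
      exact absurd (lt_of_le_of_lt this hq2) (lt_irrefl _)
    obtain ⟨n, hn1, hn2⟩ := (frequently_atTop.mp (hxvis q hpos)) 1
    refine ⟨n, hn1, ?_⟩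
    rw [htel x hx n]
    have hgx : g x < (q : ℝ) := by exact_mod_cast hq1
    have : (q : ℝ) < g (T^[n] x) := hn2
    linarith
  · -- g x attains the essential supremum
    have hxinE : x ∈ E := le_of_eq (le_antisymm hxle (not_lt.mp hcase)).symm
    obtain ⟨n, hn1, hn2⟩ := (frequently_atTop.mp (hxE hxinE)) 1
    refine ⟨n, hn1, ?_⟩
    rw [htel x hx n]
    have : (g x : EReal) ≤ (g (T^[n] x) : EReal) := le_trans hxle hn2
    have := EReal.coe_le_coe_iff.mp this
    linarith
end
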